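/- Let N ≥ 1, K ≥ 1, and for each i ∈ {1, …, N} let p_i ∈ (0, 1], σ_i > 0, ω̄_i > 0 and π_i ∈ (0, 1] be constants with ∑_{i=1}^N π_i ≤ K; set θ_i = ω̄_i·(1 − p_i·π_i)/(p_i·π_i). On a probability space with a filtration (ℱ_t)_{t≥0}, let Q_{i,t} and ω_{i,t} be real-valued processes such that Q_{i,t} and ω_{i,t+1} are ℱ_t-measurable, Q_{i,0} is square-integrable, each ω_{i,t} is nonnegative and integrable with E[ω_{i,t}] = ω̄_i, ω_{i,t+1} is independent of Q_{i,t}, and ω_{i,t+1}·Q_{i,t}² is integrable. For each t and i, let S_{i,t} be a {0,1}-valued random variable independent of ℱ_t with P(S_{i,t} = 1) = p_i, and let A_{i,t} be square-integrable, independent of the σ-algebra generated by ℱ_t and S_{i,t}, with E[A_{i,t}] = 0 and E[A_{i,t}²] = σ_i². Suppose the scheduling vector U_t = (U_{1,t}, …, U_{N,t}) is ℱ_t-measurable with values in {0,1}^N, satisfies ∑_{i=1}^N U_{i,t} ≤ K, and almost surely maximizes ∑_{i=1}^N (θ_i + ω_{i,t+1})·p_i·Q_{i,t}²·u_i over all u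 ∈ {0,1}^N with ∑_i u_i ≤ K, and that Q_{i,t+1} = (1 − U_{i,t}·S_{i,t})·Q_{i,t} + A_{i,t}. Then limsup_{T→∞} (1/(N·T))·∑_{t=0}^{T−1} ∑_{i=1}^N E[ω_{i,t+1}·Q_{i,t+1}²] ≤ (1/N)·∑_{i=1}^N ω̄_i·σ_i²/(p_i·π_i). -/

import Mathlib

open MeasureTheory ProbabilityTheory Filter Finset Topology


/-- top-k subset existence -/
lemma exists_topk {α : Type*} [DecidableEq α] (c : α → ℝ) :
    ∀ (k : ℕ) (s : Finset α), k ≤ s.card →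
      ∃ t ⊆ s, t.card = k ∧ ∀ i ∈ t, ∀ j ∈ s \ t, c j ≤ c i := by
  intro k
  induction k with
  | zero => exact fun s _ => ⟨∅, empty_subset s, card_empty, by simp⟩
  | succ k ih =>
    intro s hs
    have hne : s.Nonempty := card_pos.mp (lt_of_lt_of_le (Nat.succ_pos k) hs)
    obtain ⟨i0, hi0s, hi0max⟩ := s.exists_max_image c hne
    have hcard : k ≤ (s.erase i0).card := by
      rw [card_erase_of_mem hi0s]; omega
    obtain ⟨t', ht's, ht'c, ht'p⟩ := ih (s.erase i0) hcard
    have hi0t' : i0 ∉ t' := fun h => (notMem_erase i0 s) (ht's h)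
    refine ⟨insert i0 t', ?_, ?_, ?_⟩
    · exact insert_subset hi0s (ht's.trans (erase_subset i0 s))
    · rw [card_insert_of_notMem hi0t', ht'c]
    · intro i hi j hj
      rw [Finset.mem_sdiff] at hj
      rcases mem_insert.mp hi with rfl | hit'
      · exact hi0max j hj.1
      · refine ht'p i hit' j (mem_sdiff.mpr ⟨mem_erase.mpr ⟨?_, hj.1⟩, ?_⟩)
        · rintro rfl; exact hj.2 (mem_insert_self j t')
        · exact fun h => hj.2 (mem_insert_of_mem h)

/-- selection lemma: a fractional feasible point is dominated by some binary feasible point -/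
lemma exists_binary_dominating {N K : ℕ} (hK : 1 ≤ K) (c πv : Fin N → ℝ)
    (hc : ∀ i, 0 ≤ c i) (hπ0 : ∀ i, 0 ≤ πv i) (hπ1 : ∀ i, πv i ≤ 1)
    (hsum : (∑ i, πv i) ≤ (K : ℝ)) :
    ∃ u : Fin N → ℝ, (∀ i, u i = 0 ∨ u i = 1) ∧ (∑ i, u i) ≤ (K : ℝ) ∧
      (∑ i, c i * πv i) ≤ ∑ i, c i * u i := by
  by_cases hNK : N ≤ K
  · refine ⟨fun _ => 1, fun _ => Or.inr rfl, ?_, ?_⟩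
    · simp only [sum_const, card_univ, Fintype.card_fin, nsmul_eq_mul, mul_one]
      exact_mod_cast hNK
    · exact sum_le_sum fun i _ => by
        have := mul_le_mul_of_nonneg_left (hπ1 i) (hc i); simpa using this
  · push_neg at hNK
    have hKN : K ≤ (Finset.univ : Finset (Fin N)).card := by
      simp [card_univ]; omega
    obtain ⟨t, hts, htc, htp⟩ := exists_topk c K Finset.univ hKN
    have htne : t.Nonempty := card_pos.mp (by rw [htc]; omega)
    obtain ⟨i0, hi0t, hi0min⟩ := t.exists_min_image c htne
    set m := c i0 with hm
    have hm0 : 0 ≤ m := hc i0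
    refine ⟨fun i => if i ∈ t then 1 else 0, fun i => by by_cases h : i ∈ t <;> simp [h], ?_, ?_⟩
    · have : (∑ i, if i ∈ t then (1:ℝ) else 0) = t.card := by
        rw [Finset.sum_ite_mem, univ_inter, sum_const, nsmul_eq_mul, mul_one]
      rw [this, htc]
    · have hsplit : (∑ i, c i * πv i)
          = (∑ i ∈ t, c i * πv i) + ∑ i ∈ Finset.univ \ t, c i * πv i := by
        rw [← Finset.sum_sdiff hts]; ring
      have h1 : (∑ i ∈ Finset.univ \ t, c i * πv i) ≤ ∑ i ∈ Finset.univ \ t, m * πv i :=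
        sum_le_sum fun j hj => mul_le_mul_of_nonneg_right (htp i0 hi0t j hj) (hπ0 j)
      have h2 : (∑ i ∈ Finset.univ \ t, m * πv i) = m * ((∑ i, πv i) - ∑ i ∈ t, πv i) := by
        rw [← mul_sum, Finset.sum_sdiff_eq_sub hts]
      have h3 : m * ((∑ i, πv i) - ∑ i ∈ t, πv i) ≤ m * ((K : ℝ) - ∑ i ∈ t, πv i) :=
        mul_le_mul_of_nonneg_left (by linarith) hm0
      have h4 : m * ((K : ℝ) - ∑ i ∈ t, πv i) = ∑ i ∈ t, m * (1 - πv i) := by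
        simp only [mul_sub, mul_one, sum_sub_distrib, sum_const, nsmul_eq_mul, htc, mul_sum]; ring
      have h5 : (∑ i ∈ t, m * (1 - πv i)) ≤ ∑ i ∈ t, c i * (1 - πv i) :=
        sum_le_sum fun i hi => mul_le_mul_of_nonneg_right (hi0min i hi) (by linarith [hπ1 i])
      have h6 : (∑ i ∈ t, c i * πv i) + (∑ i ∈ t, c i * (1 - πv i)) = ∑ i ∈ t, c i := by
        rw [← sum_add_distrib]; exact Finset.sum_congr rfl fun i _ => by ring
      have h7 : (∑ i, c i * if i ∈ t then (1:ℝ) else 0) = ∑ i ∈ t, c i := by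
        rw [show (fun i => c i * if i ∈ t then (1:ℝ) else 0)
            = fun i => if i ∈ t then c i else 0 from funext fun i => by
          by_cases h : i ∈ t <;> simp [h]]
        rw [Finset.sum_ite_mem, univ_inter]
      rw [h7, hsplit]; linarith

/-- Theorem 2: with `θᵢ = ω̄ᵢ·(1 − pᵢ·πᵢ)/(pᵢ·πᵢ)` built from a feasible stationary
randomized scheme `π` (`πᵢ ∈ (0,1]`, `∑ πᵢ ≤ K`), the max-weight scheduling scheme
(maximizing `∑ (θᵢ + ω_{i,t+1})·pᵢ·Q_{i,t}²·uᵢ` over `u ∈ {0,1}^N`, `∑ uᵢ ≤ K`)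
attains average UoI
`limsup (1/(N·T)) ∑_{t<T} ∑ᵢ E[ω_{i,t+1}·Q_{i,t+1}²] ≤ (1/N) ∑ᵢ ω̄ᵢ·σᵢ²/(pᵢ·πᵢ)`. -/
theorem multi_terminal_UoI_bound {Ω : Type*} {m0 : MeasurableSpace Ω}
    (μ : Measure Ω) [IsProbabilityMeasure μ]
    (N K : ℕ) (hN : 1 ≤ N) (hK : 1 ≤ K)
    (ℱ : Filtration ℕ m0)
    (p σ wbar πs θ : Fin N → ℝ)
    (hp : ∀ i, p i ∈ Set.Ioc (0 : ℝ) 1) (hσ : ∀ i, 0 < σ i)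
    (hwbar : ∀ i, 0 < wbar i) (hπs : ∀ i, πs i ∈ Set.Ioc (0 : ℝ) 1)
    (hπK : (∑ i, πs i) ≤ (K : ℝ))
    (hθ : ∀ i, θ i = wbar i * (1 - p i * πs i) / (p i * πs i))
    (Q w S A U : Fin N → ℕ → Ω → ℝ)
    (hQmeas : ∀ i t, Measurable[ℱ t] (Q i t))
    (hwmeas : ∀ i t, Measurable[ℱ t] (w i (t + 1)))
    (hQ0 : ∀ i, MemLp (Q i 0) 2 μ)
    (hwpos : ∀ i t x, 0 ≤ w i t x)
    (hwint : ∀ i t, Integrable (w i t) μ)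
    (hwmean : ∀ i t, (∫ x, w i t x ∂μ) = wbar i)
    (hwQindep : ∀ i t, IndepFun (w i (t + 1)) (Q i t) μ)
    (hwQint : ∀ i t, Integrable (fun x => w i (t + 1) x * Q i t x ^ 2) μ)
    (hSmeas : ∀ i t, Measurable (S i t))
    (hS01 : ∀ i t x, S i t x = 0 ∨ S i t x = 1)
    (hSindep : ∀ i t, Indep (ℱ t) (MeasurableSpace.comap (S i t) inferInstance) μ)
    (hSp : ∀ i t, μ {x | S i t x = 1} = ENNReal.ofReal (p i))
    (hAmeas : ∀ i t, Measurable (A i t)) (hA2 : ∀ i t, MemLp (A i t) 2 μ)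
    (hAindep : ∀ i t, Indep (ℱ t ⊔ MeasurableSpace.comap (S i t) inferInstance)
        (MeasurableSpace.comap (A i t) inferInstance) μ)
    (hAmean : ∀ i t, (∫ x, A i t x ∂μ) = 0)
    (hAvar : ∀ i t, (∫ x, A i t x ^ 2 ∂μ) = (σ i) ^ 2)
    (hUmeas : ∀ i t, Measurable[ℱ t] (U i t))
    (hU01 : ∀ i t x, U i t x = 0 ∨ U i t x = 1)
    (hUK : ∀ t x, (∑ i, U i t x) ≤ (K : ℝ))
    (hUmax : ∀ t, ∀ᵐ x ∂μ, ∀ u : Fin N → ℝ,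
      (∀ i, u i = 0 ∨ u i = 1) → (∑ i, u i) ≤ (K : ℝ) →
      (∑ i, (θ i + w i (t + 1) x) * p i * Q i t x ^ 2 * u i)
        ≤ ∑ i, (θ i + w i (t + 1) x) * p i * Q i t x ^ 2 * U i t x)
    (hQdyn : ∀ i t x, Q i (t + 1) x = (1 - U i t x * S i t x) * Q i t x + A i t x) :
    limsup (fun T : ℕ => (1 / ((N : ℝ) * T)) *
        ∑ t ∈ Finset.range T, ∑ i, ∫ x, w i (t + 1) x * Q i (t + 1) x ^ 2 ∂μ) atTop
      ≤ (1 / (N : ℝ)) * ∑ i, wbar i * σ i ^ 2 / (p i * πs i) := by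
  classical
  have hp0 : ∀ i, 0 < p i := fun i => (hp i).1
  have hπ0 : ∀ i, 0 < πs i := fun i => (hπs i).1
  have hpπ0 : ∀ i, 0 < p i * πs i := fun i => mul_pos (hp0 i) (hπ0 i)
  have hpπ1 : ∀ i, p i * πs i ≤ 1 := fun i => by
    nlinarith [(hp i).2, (hπs i).2, (hπ0 i).le, (hp0 i).le]
  have hθ0 : ∀ i, 0 ≤ θ i := fun i => by
    rw [hθ i]
    exact div_nonneg (mul_nonneg (hwbar i).le (by linarith [hpπ1 i])) (hpπ0 i).le
  have hQm : ∀ i t, Measurable (Q i t) := fun i t => (hQmeas i t).mono (ℱ.le t) le_rfl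
  have hwm : ∀ i t, Measurable (w i (t + 1)) := fun i t => (hwmeas i t).mono (ℱ.le t) le_rfl
  have hUm : ∀ i t, Measurable (U i t) := fun i t => (hUmeas i t).mono (ℱ.le t) le_rfl
  -- Q is in L² for all t
  have hQL2 : ∀ i t, MemLp (Q i t) 2 μ := by
    intro i t
    induction t with
    | zero => exact hQ0 i
    | succ t ih =>
      have h1 : MemLp (fun x => (1 - U i t x * S i t x) * Q i t x) 2 μ := by
        refine MemLp.of_le ih
          ((measurable_const.sub ((hUm i t).mul (hSmeas i t))).mul
            (hQm i t)).aestronglyMeasurable (Eventually.of_forall fun x => ?_)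
        rcases hU01 i t x with h | h <;> rcases hS01 i t x with h' | h' <;>
          simp [Real.norm_eq_abs, h, h', abs_nonneg]
      have heq : Q i (t + 1) = fun x => (1 - U i t x * S i t x) * Q i t x + A i t x :=
        funext (hQdyn i t)
      rw [heq]
      exact h1.add (hA2 i t)
  have hQsq : ∀ i t, Integrable (fun x => Q i t x ^ 2) μ := fun i t => (hQL2 i t).integrable_sq
  have hQ2nn : ∀ i t, 0 ≤ ∫ x, Q i t x ^ 2 ∂μ := fun i t => integral_nonneg fun x => sq_nonneg _
  -- independence builders
  have hSindF : ∀ i t (f : Ω → ℝ), Measurable[ℱ t] f → IndepFun f (S i t) μ := by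
    intro i t f hf
    rw [IndepFun_iff_Indep]
    exact indep_of_indep_of_le_left (hSindep i t) (measurable_iff_comap_le.mp hf)
  have hAindF : ∀ i t (f : Ω → ℝ) (g : ℝ → ℝ),
      Measurable[ℱ t ⊔ MeasurableSpace.comap (S i t) inferInstance] f → Measurable g →
      IndepFun f (fun x => g (A i t x)) μ := by
    intro i t f g hf hg
    rw [IndepFun_iff_Indep]
    refine indep_of_indep_of_le_right (indep_of_indep_of_le_left (hAindep i t)
      (measurable_iff_comap_le.mp hf)) (measurable_iff_comap_le.mp ?_)
    exact hg.comp (measurable_iff_comap_le.mpr le_rfl)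
  have hAint : ∀ i t, Integrable (A i t) μ := fun i t => (hA2 i t).integrable one_le_two
  have hA2int : ∀ i t, Integrable (fun x => A i t x ^ 2) μ := fun i t => (hA2 i t).integrable_sq
  have hES : ∀ i t, (∫ x, S i t x ∂μ) = p i := by
    intro i t
    have hset : MeasurableSet {x | S i t x = 1} := (hSmeas i t) (measurableSet_singleton 1)
    have heq : S i t = ({x | S i t x = 1} : Set Ω).indicator (fun _ => (1 : ℝ)) := by
      funext x
      rcases hS01 i t x with h | h <;> simp [Set.indicator_apply, h]
    rw [heq, integral_indicator_const (1 : ℝ) hset, measureReal_def, hSp i t, smul_eq_mul, mul_one,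
      ENNReal.toReal_ofReal (hp0 i).le]
  -- the one-step drift identity, for a generic nonnegative ℱ_t-measurable weight W
  have step : ∀ (i : Fin N) (t : ℕ) (W : Ω → ℝ), Measurable[ℱ t] W → (∀ x, 0 ≤ W x) →
      Integrable W μ → Integrable (fun x => W x * Q i t x ^ 2) μ →
      (∫ x, W x * Q i (t + 1) x ^ 2 ∂μ)
        = (∫ x, W x * Q i t x ^ 2 ∂μ) - p i * (∫ x, W x * U i t x * Q i t x ^ 2 ∂μ)
          + (∫ x, W x ∂μ) * σ i ^ 2 := by
    intro i t W hWmF hW0 hWint hWQint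
    have hWm : Measurable W := hWmF.mono (ℱ.le t) le_rfl
    have hpt : (fun x => W x * Q i (t + 1) x ^ 2)
        = fun x => (W x * Q i t x ^ 2 - (W x * U i t x * Q i t x ^ 2) * S i t x)
          + ((W x * ((1 - U i t x * S i t x) * Q i t x)) * A i t x * 2
             + W x * A i t x ^ 2) := by
      funext x
      rw [hQdyn i t x]
      rcases hU01 i t x with h | h <;> rcases hS01 i t x with h' | h' <;> rw [h, h'] <;> ring
    have hT2 : Integrable (fun x => (W x * U i t x * Q i t x ^ 2) * S i t x) μ := by
      refine Integrable.mono' hWQint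
        ((((hWm.mul (hUm i t)).mul ((hQm i t).pow_const 2)).mul
          (hSmeas i t)).aestronglyMeasurable) (Eventually.of_forall fun x => ?_)
      rcases hU01 i t x with h | h <;> rcases hS01 i t x with h' | h' <;> rw [h, h'] <;>
        simp only [mul_zero, mul_one, zero_mul, one_mul, norm_zero, Real.norm_eq_abs] <;>
        first
          | exact mul_nonneg (hW0 x) (sq_nonneg _)
          | exact le_of_eq (abs_of_nonneg (mul_nonneg (hW0 x) (sq_nonneg _)))
    have hWQabs : Integrable (fun x => (W x + W x * Q i t x ^ 2) / 2) μ :=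
      (hWint.add hWQint).div_const 2
    have habsQ : ∀ x, W x * |Q i t x| ≤ (W x + W x * Q i t x ^ 2) / 2 := by
      intro x
      nlinarith [sq_nonneg (|Q i t x| - 1), sq_abs (Q i t x), abs_nonneg (Q i t x), hW0 x,
        mul_le_mul_of_nonneg_left (show |Q i t x| ≤ (1 + Q i t x ^ 2) / 2 by
          nlinarith [sq_nonneg (|Q i t x| - 1), sq_abs (Q i t x)]) (hW0 x)]
    have hT3f : Integrable (fun x => W x * ((1 - U i t x * S i t x) * Q i t x)) μ := by
      refine Integrable.mono' hWQabs
        ((hWm.mul ((measurable_const.sub ((hUm i t).mul (hSmeas i t))).mul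
          (hQm i t))).aestronglyMeasurable) (Eventually.of_forall fun x => ?_)
      rcases hU01 i t x with h | h <;> rcases hS01 i t x with h' | h' <;> rw [h, h'] <;>
        simp only [mul_zero, mul_one, zero_mul, one_mul, sub_zero, sub_self,
          norm_zero, Real.norm_eq_abs]
      · rw [abs_mul, abs_of_nonneg (hW0 x)]; exact habsQ x
      · rw [abs_mul, abs_of_nonneg (hW0 x)]; exact habsQ x
      · rw [abs_mul, abs_of_nonneg (hW0 x)]; exact habsQ x
      · have h1 := hW0 x
        have h2 := mul_nonneg (hW0 x) (sq_nonneg (Q i t x))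
        linarith
    have hmeasJ : Measurable[ℱ t ⊔ MeasurableSpace.comap (S i t) inferInstance]
        (fun x => W x * ((1 - U i t x * S i t x) * Q i t x)) := by
      have hS' : Measurable[ℱ t ⊔ MeasurableSpace.comap (S i t) inferInstance] (S i t) :=
        (measurable_iff_comap_le.mpr le_rfl).mono le_sup_right le_rfl
      have hW' : Measurable[ℱ t ⊔ MeasurableSpace.comap (S i t) inferInstance] W :=
        hWmF.mono le_sup_left le_rfl
      have hU' : Measurable[ℱ t ⊔ MeasurableSpace.comap (S i t) inferInstance] (U i t) :=
        (hUmeas i t).mono le_sup_left le_rfl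
      have hQ' : Measurable[ℱ t ⊔ MeasurableSpace.comap (S i t) inferInstance] (Q i t) :=
        (hQmeas i t).mono le_sup_left le_rfl
      exact hW'.mul ((measurable_const.sub (hU'.mul hS')).mul hQ')
    have hind3 : IndepFun (fun x => W x * ((1 - U i t x * S i t x) * Q i t x)) (A i t) μ :=
      hAindF i t _ id hmeasJ measurable_id
    have hT3 : Integrable (fun x => (W x * ((1 - U i t x * S i t x) * Q i t x)) * A i t x) μ :=
      hind3.integrable_mul hT3f (hAint i t)
    have h3 : (∫ x, (W x * ((1 - U i t x * S i t x) * Q i t x)) * A i t x ∂μ) = 0 := by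
      calc (∫ x, (W x * ((1 - U i t x * S i t x) * Q i t x)) * A i t x ∂μ)
          = (∫ x, W x * ((1 - U i t x * S i t x) * Q i t x) ∂μ) * (∫ x, A i t x ∂μ) :=
            hind3.integral_fun_mul_eq_mul_integral hT3f.aestronglyMeasurable (hAint i t).aestronglyMeasurable
        _ = 0 := by rw [hAmean i t, mul_zero]
    have hind4 : IndepFun W (fun x => A i t x ^ 2) μ :=
      hAindF i t W (fun a => a ^ 2) (hWmF.mono le_sup_left le_rfl) (measurable_id.pow_const 2)
    have hT4 : Integrable (fun x => W x * A i t x ^ 2) μ :=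
      hind4.integrable_mul hWint (hA2int i t)
    have h4 : (∫ x, W x * A i t x ^ 2 ∂μ) = (∫ x, W x ∂μ) * σ i ^ 2 := by
      calc (∫ x, W x * A i t x ^ 2 ∂μ)
          = (∫ x, W x ∂μ) * (∫ x, A i t x ^ 2 ∂μ) :=
            hind4.integral_fun_mul_eq_mul_integral hWint.aestronglyMeasurable (hA2int i t).aestronglyMeasurable
        _ = _ := by rw [hAvar i t]
    have hX : Integrable (fun x => W x * U i t x * Q i t x ^ 2) μ := by
      refine Integrable.mono' hWQint
        (((hWm.mul (hUm i t)).mul ((hQm i t).pow_const 2)).aestronglyMeasurable)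
        (Eventually.of_forall fun x => ?_)
      rcases hU01 i t x with h | h <;> rw [h] <;>
        simp only [mul_zero, mul_one, zero_mul, one_mul, norm_zero, Real.norm_eq_abs] <;>
        first
          | exact mul_nonneg (hW0 x) (sq_nonneg _)
          | exact le_of_eq (abs_of_nonneg (mul_nonneg (hW0 x) (sq_nonneg _)))
    have hSint : Integrable (S i t) μ := by
      refine Integrable.mono' (integrable_const (1 : ℝ))
        (hSmeas i t).aestronglyMeasurable (Eventually.of_forall fun x => ?_)
      rcases hS01 i t x with h | h <;> simp [h]
    have hindS : IndepFun (fun x => W x * U i t x * Q i t x ^ 2) (S i t) μ :=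
      hSindF i t _ ((hWmF.mul (hUmeas i t)).mul ((hQmeas i t).pow_const 2))
    have h2 : (∫ x, (W x * U i t x * Q i t x ^ 2) * S i t x ∂μ)
        = (∫ x, W x * U i t x * Q i t x ^ 2 ∂μ) * p i := by
      calc (∫ x, (W x * U i t x * Q i t x ^ 2) * S i t x ∂μ)
          = (∫ x, W x * U i t x * Q i t x ^ 2 ∂μ) * (∫ x, S i t x ∂μ) :=
            hindS.integral_fun_mul_eq_mul_integral hX.aestronglyMeasurable hSint.aestronglyMeasurable
        _ = _ := by rw [hES i t]
    have hI3 : Integrable (fun x => (W x * ((1 - U i t x * S i t x) * Q i t x)) * A i t x * 2) μ :=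
      hT3.mul_const 2
    have hI2 : Integrable (fun x =>
        (W x * ((1 - U i t x * S i t x) * Q i t x)) * A i t x * 2 + W x * A i t x ^ 2) μ :=
      hI3.add hT4
    have hI1 : Integrable (fun x =>
        W x * Q i t x ^ 2 - (W x * U i t x * Q i t x ^ 2) * S i t x) μ := hWQint.sub hT2
    rw [hpt, integral_add hI1 hI2, integral_add hI3 hT4, integral_sub hWQint hT2,
      integral_mul_const, h3, h2, h4]
    ring
  -- scalar identities
  have hkey : ∀ i : Fin N, p i * πs i * θ i + p i * πs i * wbar i = wbar i := by
    intro i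
    rw [hθ i]
    have h := (hpπ0 i).ne'
    have hp' := (hp0 i).ne'
    have hπ' := (hπ0 i).ne'
    field_simp
    ring
  have hBterm : ∀ i : Fin N, wbar i * σ i ^ 2 + θ i * σ i ^ 2
      = wbar i * σ i ^ 2 / (p i * πs i) := by
    intro i
    rw [hθ i]
    have h := (hpπ0 i).ne'
    have hp' := (hp0 i).ne'
    have hπ' := (hπ0 i).ne'
    field_simp
    ring
  set B : ℝ := ∑ i, wbar i * σ i ^ 2 / (p i * πs i) with hBdef
  -- the per-slot drift inequality
  have hdrift : ∀ t : ℕ,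
      (∑ i, ∫ x, w i (t + 1) x * Q i (t + 1) x ^ 2 ∂μ)
        + (∑ i, θ i * ∫ x, Q i (t + 1) x ^ 2 ∂μ)
      ≤ (∑ i, θ i * ∫ x, Q i t x ^ 2 ∂μ) + B := by
    intro t
    have hwstep : ∀ i : Fin N, (∫ x, w i (t + 1) x * Q i (t + 1) x ^ 2 ∂μ)
        = (∫ x, w i (t + 1) x * Q i t x ^ 2 ∂μ)
          - p i * (∫ x, w i (t + 1) x * U i t x * Q i t x ^ 2 ∂μ) + wbar i * σ i ^ 2 := by
      intro i
      rw [step i t (w i (t + 1)) (hwmeas i t) (fun x => hwpos i (t + 1) x) (hwint i (t + 1))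
        (hwQint i t), hwmean i (t + 1)]
    have hqstep : ∀ i : Fin N, (∫ x, Q i (t + 1) x ^ 2 ∂μ)
        = (∫ x, Q i t x ^ 2 ∂μ) - p i * (∫ x, U i t x * Q i t x ^ 2 ∂μ) + σ i ^ 2 := by
      intro i
      have h := step i t (fun _ => (1 : ℝ)) measurable_const (fun _ => zero_le_one)
        (integrable_const 1) (by simpa using hQsq i t)
      simpa using h
    have hwQ : ∀ i : Fin N, (∫ x, w i (t + 1) x * Q i t x ^ 2 ∂μ)
        = wbar i * ∫ x, Q i t x ^ 2 ∂μ := by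
      intro i
      have hind : IndepFun (w i (t + 1)) (fun x => Q i t x ^ 2) μ :=
        (hwQindep i t).comp measurable_id (measurable_id.pow_const 2)
      calc (∫ x, w i (t + 1) x * Q i t x ^ 2 ∂μ)
          = (∫ x, w i (t + 1) x ∂μ) * (∫ x, Q i t x ^ 2 ∂μ) :=
            hind.integral_fun_mul_eq_mul_integral (hwint i (t + 1)).aestronglyMeasurable (hQsq i t).aestronglyMeasurable
        _ = _ := by rw [hwmean i (t + 1)]
    have hUQint : ∀ i : Fin N, Integrable (fun x => U i t x * Q i t x ^ 2) μ := by
      intro i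
      refine Integrable.mono' (hQsq i t)
        (((hUm i t).mul ((hQm i t).pow_const 2)).aestronglyMeasurable)
        (Eventually.of_forall fun x => ?_)
      rcases hU01 i t x with h | h <;> rw [h] <;>
        simp only [zero_mul, one_mul, norm_zero, Real.norm_eq_abs]
      · exact sq_nonneg _
      · exact le_of_eq (abs_of_nonneg (sq_nonneg _))
    have hwUQint : ∀ i : Fin N, Integrable
        (fun x => w i (t + 1) x * U i t x * Q i t x ^ 2) μ := by
      intro i
      refine Integrable.mono' (hwQint i t)
        ((((hwm i t).mul (hUm i t)).mul ((hQm i t).pow_const 2)).aestronglyMeasurable)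
        (Eventually.of_forall fun x => ?_)
      rcases hU01 i t x with h | h <;> rw [h] <;>
        simp only [mul_zero, mul_one, zero_mul, one_mul, norm_zero, Real.norm_eq_abs]
      · exact mul_nonneg (hwpos i (t + 1) x) (sq_nonneg _)
      · exact le_of_eq (abs_of_nonneg (mul_nonneg (hwpos i (t + 1) x) (sq_nonneg _)))
    have hRint : ∀ i : Fin N, Integrable
        (fun x => (θ i + w i (t + 1) x) * p i * Q i t x ^ 2 * U i t x) μ := by
      intro i
      have heq : (fun x => (θ i + w i (t + 1) x) * p i * Q i t x ^ 2 * U i t x)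
          = fun x => p i * (θ i * (U i t x * Q i t x ^ 2))
              + p i * (w i (t + 1) x * U i t x * Q i t x ^ 2) :=
        funext fun x => by ring
      rw [heq]
      exact (((hUQint i).const_mul (θ i)).const_mul (p i)).add ((hwUQint i).const_mul (p i))
    have hLint : ∀ i : Fin N, Integrable
        (fun x => (θ i + w i (t + 1) x) * p i * Q i t x ^ 2 * πs i) μ := by
      intro i
      have heq : (fun x => (θ i + w i (t + 1) x) * p i * Q i t x ^ 2 * πs i)
          = fun x => (p i * πs i) * (θ i * Q i t x ^ 2)
              + (p i * πs i) * (w i (t + 1) x * Q i t x ^ 2) :=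
        funext fun x => by ring
      rw [heq]
      exact ((((hQsq i t).const_mul (θ i)).const_mul _).add ((hwQint i t).const_mul _))
    have hae : ∀ᵐ x ∂μ,
        (∑ i, (θ i + w i (t + 1) x) * p i * Q i t x ^ 2 * πs i)
          ≤ ∑ i, (θ i + w i (t + 1) x) * p i * Q i t x ^ 2 * U i t x := by
      filter_upwards [hUmax t] with x hx
      obtain ⟨u, hu01, huK, hule⟩ := exists_binary_dominating hK
        (fun i => (θ i + w i (t + 1) x) * p i * Q i t x ^ 2) πs
        (fun i => mul_nonneg (mul_nonneg (add_nonneg (hθ0 i) (hwpos i (t + 1) x))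
          (hp0 i).le) (sq_nonneg _))
        (fun i => (hπ0 i).le) (fun i => (hπs i).2) hπK
      exact le_trans hule (hx u hu01 huK)
    have hint : (∫ x, ∑ i, (θ i + w i (t + 1) x) * p i * Q i t x ^ 2 * πs i ∂μ)
        ≤ ∫ x, ∑ i, (θ i + w i (t + 1) x) * p i * Q i t x ^ 2 * U i t x ∂μ :=
      integral_mono_ae (integrable_finset_sum _ fun i _ => hLint i)
        (integrable_finset_sum _ fun i _ => hRint i) hae
    have hLcalc : (∫ x, ∑ i, (θ i + w i (t + 1) x) * p i * Q i t x ^ 2 * πs i ∂μ)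
        = ∑ i, wbar i * ∫ x, Q i t x ^ 2 ∂μ := by
      rw [integral_finset_sum _ fun i _ => hLint i]
      refine Finset.sum_congr rfl fun i _ => ?_
      have heq : (fun x => (θ i + w i (t + 1) x) * p i * Q i t x ^ 2 * πs i)
          = fun x => (p i * πs i) * (θ i * Q i t x ^ 2)
              + (p i * πs i) * (w i (t + 1) x * Q i t x ^ 2) :=
        funext fun x => by ring
      rw [heq, integral_add (((hQsq i t).const_mul (θ i)).const_mul _)
        ((hwQint i t).const_mul _), integral_const_mul, integral_const_mul,
        integral_const_mul, hwQ i]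
      linear_combination (∫ x, Q i t x ^ 2 ∂μ) * hkey i
    have hRcalc : (∫ x, ∑ i, (θ i + w i (t + 1) x) * p i * Q i t x ^ 2 * U i t x ∂μ)
        = ∑ i, (θ i * (p i * ∫ x, U i t x * Q i t x ^ 2 ∂μ)
            + p i * ∫ x, w i (t + 1) x * U i t x * Q i t x ^ 2 ∂μ) := by
      rw [integral_finset_sum _ fun i _ => hRint i]
      refine Finset.sum_congr rfl fun i _ => ?_
      have heq : (fun x => (θ i + w i (t + 1) x) * p i * Q i t x ^ 2 * U i t x)
          = fun x => p i * (θ i * (U i t x * Q i t x ^ 2))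
              + p i * (w i (t + 1) x * U i t x * Q i t x ^ 2) :=
        funext fun x => by ring
      rw [heq, integral_add (((hUQint i).const_mul (θ i)).const_mul (p i))
        ((hwUQint i).const_mul (p i)), integral_const_mul, integral_const_mul,
        integral_const_mul]
      ring
    have hint' : (∑ i, wbar i * ∫ x, Q i t x ^ 2 ∂μ)
        ≤ ∑ i, (θ i * (p i * ∫ x, U i t x * Q i t x ^ 2 ∂μ)
            + p i * ∫ x, w i (t + 1) x * U i t x * Q i t x ^ 2 ∂μ) := by
      rw [← hLcalc, ← hRcalc]; exact hint
    have e1 : (∑ i, ∫ x, w i (t + 1) x * Q i (t + 1) x ^ 2 ∂μ)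
        = ∑ i, (wbar i * (∫ x, Q i t x ^ 2 ∂μ)
            - p i * (∫ x, w i (t + 1) x * U i t x * Q i t x ^ 2 ∂μ) + wbar i * σ i ^ 2) :=
      Finset.sum_congr rfl fun i _ => by rw [hwstep i, hwQ i]
    have e2 : (∑ i, θ i * ∫ x, Q i (t + 1) x ^ 2 ∂μ)
        = ∑ i, (θ i * (∫ x, Q i t x ^ 2 ∂μ)
            - θ i * (p i * ∫ x, U i t x * Q i t x ^ 2 ∂μ) + θ i * σ i ^ 2) :=
      Finset.sum_congr rfl fun i _ => by rw [hqstep i]; ring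
    have hBsplit : (∑ i, wbar i * σ i ^ 2) + (∑ i, θ i * σ i ^ 2) = B := by
      rw [hBdef, ← Finset.sum_add_distrib]
      exact Finset.sum_congr rfl fun i _ => hBterm i
    have hsplit2 : (∑ i, (θ i * (p i * ∫ x, U i t x * Q i t x ^ 2 ∂μ)
        + p i * ∫ x, w i (t + 1) x * U i t x * Q i t x ^ 2 ∂μ))
        = (∑ i, θ i * (p i * ∫ x, U i t x * Q i t x ^ 2 ∂μ))
          + ∑ i, p i * ∫ x, w i (t + 1) x * U i t x * Q i t x ^ 2 ∂μ :=
      Finset.sum_add_distrib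
    rw [e1, e2]
    simp only [Finset.sum_add_distrib, Finset.sum_sub_distrib]
    linarith [hint', hBsplit, hsplit2]
  -- telescoping
  have hVnn : ∀ T : ℕ, (0 : ℝ) ≤ ∑ i, θ i * ∫ x, Q i T x ^ 2 ∂μ := fun T =>
    Finset.sum_nonneg fun i _ => mul_nonneg (hθ0 i) (hQ2nn i T)
  have hann : ∀ t : ℕ, (0 : ℝ) ≤ ∑ i, ∫ x, w i (t + 1) x * Q i (t + 1) x ^ 2 ∂μ := fun t =>
    Finset.sum_nonneg fun i _ => integral_nonneg fun x =>
      mul_nonneg (hwpos i (t + 1) x) (sq_nonneg _)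
  have hkey2 : ∀ T : ℕ,
      (∑ t ∈ Finset.range T, ∑ i, ∫ x, w i (t + 1) x * Q i (t + 1) x ^ 2 ∂μ)
        + (∑ i, θ i * ∫ x, Q i T x ^ 2 ∂μ)
      ≤ (∑ i, θ i * ∫ x, Q i 0 x ^ 2 ∂μ) + T * B := by
    intro T
    induction T with
    | zero => simp
    | succ T ih =>
      rw [Finset.sum_range_succ]
      have h := hdrift T
      push_cast
      linarith
  have hsum_le : ∀ T : ℕ,
      (∑ t ∈ Finset.range T, ∑ i, ∫ x, w i (t + 1) x * Q i (t + 1) x ^ 2 ∂μ)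
        ≤ (∑ i, θ i * ∫ x, Q i 0 x ^ 2 ∂μ) + T * B := fun T => by
    linarith [hkey2 T, hVnn T]
  -- limsup argument
  set C : ℝ := ∑ i, θ i * ∫ x, Q i 0 x ^ 2 ∂μ with hCdef
  have hN0 : (0 : ℝ) < N := by exact_mod_cast hN
  have hg : Tendsto (fun T : ℕ => C / ((N : ℝ) * T) + B / N) atTop (𝓝 (B / N)) := by
    have h1 : Tendsto (fun T : ℕ => C / (N : ℝ) * (1 / (T : ℝ))) atTop (𝓝 0) := by
      simpa using tendsto_one_div_atTop_nhds_zero_nat.const_mul (C / (N : ℝ))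
    have h2 : (fun T : ℕ => C / ((N : ℝ) * T) + B / N)
        = fun T : ℕ => C / (N : ℝ) * (1 / (T : ℝ)) + B / N :=
      funext fun T => by rw [mul_one_div, div_div]
    rw [h2]
    simpa using h1.add (tendsto_const_nhds (x := B / (N : ℝ)))
  have hle : ∀ᶠ T : ℕ in atTop,
      (1 / ((N : ℝ) * T)) * (∑ t ∈ Finset.range T,
        ∑ i, ∫ x, w i (t + 1) x * Q i (t + 1) x ^ 2 ∂μ)
      ≤ C / ((N : ℝ) * T) + B / N := by
    filter_upwards [eventually_ge_atTop 1] with T hT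
    have hT0 : (0 : ℝ) < T := by exact_mod_cast hT
    calc (1 / ((N : ℝ) * T)) * (∑ t ∈ Finset.range T,
          ∑ i, ∫ x, w i (t + 1) x * Q i (t + 1) x ^ 2 ∂μ)
        ≤ (1 / ((N : ℝ) * T)) * (C + T * B) := by
          refine mul_le_mul_of_nonneg_left (hsum_le T) ?_
          positivity
      _ = C / ((N : ℝ) * T) + B / N := by field_simp
  have hnn : ∀ T : ℕ, (0 : ℝ) ≤ (1 / ((N : ℝ) * T)) * (∑ t ∈ Finset.range T,
      ∑ i, ∫ x, w i (t + 1) x * Q i (t + 1) x ^ 2 ∂μ) := by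
    intro T
    refine mul_nonneg (by positivity) (Finset.sum_nonneg fun t _ => hann t)
  refine le_trans (limsup_le_limsup hle ?_ ?_) ?_
  · exact isCoboundedUnder_le_of_le atTop hnn
  · exact hg.isBoundedUnder_le
  · rw [hg.limsup_eq, div_eq_mul_inv, mul_comm, ← one_div]
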